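/- Fix an integer n > 1. Every global minimizer (a1,a2,b1,b2,α) of Problem (Q) satisfies b1+b2 < a1+a2. -/

import Mathlib

/-- Objective of Problem (Q). -/
noncomputable def FQ (n : ℕ) (a1 a2 b1 b2 α : ℝ) : ℝ :=
  ((n : ℝ) - 1) * Real.sqrt (2 * (a1 ^ 2 + b1 ^ 2) + 2 * |a1 ^ 2 - b1 ^ 2|) +
    2 * Real.sqrt ((a1 + n * a2) ^ 2 + n * α ^ 2)

/-- Feasible set of Problem (Q). -/
def FeasQ (n : ℕ) (a1 a2 b1 b2 α : ℝ) : Prop :=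
  1 ≤ a1 ∧ b1 + b2 - α + 1 ≤ a1 + a2 + α ∧ a1 + b1 + n * (a2 + b2) = 0

/-- Key step in the proof of Theorem 2: every global minimizer of Problem (Q)
satisfies `b1 + b2 < a1 + a2`. -/
theorem Q_minimizer_b_lt_a (n : ℕ) (hn : 1 < n)
    (a1 a2 b1 b2 α : ℝ)
    (hfeas : FeasQ n a1 a2 b1 b2 α)
    (hmin : ∀ a1' a2' b1' b2' α' : ℝ,
      FeasQ n a1' a2' b1' b2' α' → FQ n a1 a2 b1 b2 α ≤ FQ n a1' a2' b1' b2' α') :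
    b1 + b2 < a1 + a2 := by
  by_contra hba
  push_neg at hba
  obtain ⟨ha1, hcon, hsum⟩ := hfeas
  have h2n : (2:ℝ) ≤ (n:ℝ) := by exact_mod_cast hn
  have hnpos : (0:ℝ) < (n:ℝ) := by linarith
  have hnne : (n:ℝ) ≠ 0 := ne_of_gt hnpos
  have hα : (1:ℝ)/2 ≤ α := by linarith
  -- the candidate feasible point
  have hfeas' : FeasQ n 1 (-(1/n)) (-1) (1/n) 0 := by
    refine ⟨le_refl 1, ?_, ?_⟩
    · have hinv : (1:ℝ)/n ≤ 1/2 := by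
        rw [div_le_div_iff₀ hnpos (by norm_num : (0:ℝ) < 2)]; linarith
      linarith
    · field_simp; ring
  have hcand := hmin 1 (-(1/n)) (-1) (1/n) 0 hfeas'
  -- value at the candidate
  have hval : FQ n 1 (-(1/n)) (-1) (1/n) 0 = 2 * ((n:ℝ) - 1) := by
    unfold FQ
    have h1 : (n:ℝ) * (1/n) = 1 := mul_one_div_cancel hnne
    have h2 : (1:ℝ) + (n:ℝ) * (-(1/n)) = 0 := by
      rw [mul_neg, h1]; ring
    rw [h2]
    norm_num
    ring
  -- lower bound for the first sqrt
  have hs1 : 2 * a1 ≤ Real.sqrt (2 * (a1 ^ 2 + b1 ^ 2) + 2 * |a1 ^ 2 - b1 ^ 2|) := by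
    have h := Real.sqrt_le_sqrt (show (2*a1)^2 ≤ 2 * (a1 ^ 2 + b1 ^ 2) + 2 * |a1 ^ 2 - b1 ^ 2| by
      nlinarith [le_abs_self (a1^2 - b1^2)])
    rwa [Real.sqrt_sq (by linarith : (0:ℝ) ≤ 2*a1)] at h
  -- lower bound for the second sqrt
  have hs2 : Real.sqrt ((n:ℝ)) * (1/2) ≤ Real.sqrt ((a1 + n * a2) ^ 2 + n * α ^ 2) := by
    have hα2 : (1/2:ℝ)^2 ≤ α^2 := by nlinarith
    have h := Real.sqrt_le_sqrt (show (n:ℝ) * (1/2)^2 ≤ (a1 + n * a2) ^ 2 + n * α ^ 2 by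
      nlinarith [sq_nonneg (a1 + n * a2), mul_le_mul_of_nonneg_left hα2 hnpos.le])
    rwa [Real.sqrt_mul (le_of_lt hnpos), Real.sqrt_sq (by norm_num : (0:ℝ) ≤ 1/2)] at h
  have hsn : (1:ℝ) ≤ Real.sqrt n := by
    rw [show (1:ℝ) = Real.sqrt 1 by simp]
    exact Real.sqrt_le_sqrt (by linarith)
  have hlow : 2 * ((n:ℝ) - 1) + 1 ≤ FQ n a1 a2 b1 b2 α := by
    unfold FQ
    have hm1 : ((n:ℝ) - 1) * (2 * a1) ≤
        ((n:ℝ) - 1) * Real.sqrt (2 * (a1 ^ 2 + b1 ^ 2) + 2 * |a1 ^ 2 - b1 ^ 2|) :=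
      mul_le_mul_of_nonneg_left hs1 (by linarith)
    nlinarith
  rw [hval] at hcand
  linarith
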